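/- Strictness of m-d-separation versus d-separation: Consider the mother graph M consisting of the two sub-DAGs over Z = {X_i, X_j, X_k, T} given by G_1 with edge set {X_i → X_j, T → X_j} and G_2 with edge set {X_k → X_j, T → X_j}. Then {X_i} and {X_k} are d-separated given {X_j} in M ({X_i} ⊥_d {X_k} | {X_j}), but {X_i} and {X_k} are NOT m-d-separated given {X_j} in M ({X_i} ⊥̸_md {X_k} | {X_j}, witnessed by the single triple ⟨X_i, X_j, X_k⟩ in which X_j is an m-collider lying in the conditioning set). In particular, the converse of the implication 'm-d-separation implies d-separation' fails. -/

import Mathlib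

/-! Basic directed/undirected graph notions. -/

section Graphs

variable {V : Type*}

/-- `v` is a collider on the path (vertex list) `vs` for the directed edge relation `E`:
the path contains `u → v ← w`. -/
def IsColliderOn (E : V → V → Prop) (vs : List V) (v : V) : Prop :=
  ∃ u w, [u, v, w] <:+: vs ∧ E u v ∧ E w v

/-- `v` is an interior (non-endpoint) vertex of the path `vs`. -/
def IsInteriorOn (vs : List V) (v : V) : Prop :=
  ∃ u w, [u, v, w] <:+: vs

/-- `vs` is a d-connecting path given the conditioning set `W`: a sequence of edges of the
graph traversed in either direction, passing through no vertex more than once, such that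
every collider on it is in `W` and every non-collider on it is not in `W`. -/
def DConnPath (E : V → V → Prop) (W : Set V) (vs : List V) : Prop :=
  vs ≠ [] ∧ vs.Nodup ∧ vs.Chain' (fun a b => E a b ∨ E b a) ∧
  (∀ v, IsColliderOn E vs v → v ∈ W) ∧
  (∀ v, IsInteriorOn vs v → ¬ IsColliderOn E vs v → v ∉ W)

/-- `vs` d-connects the vertices `a` and `b` given `W`. -/
def DConnPathBetween (E : V → V → Prop) (W : Set V) (vs : List V) (a b : V) : Prop :=
  ∃ h : vs ≠ [], vs.head h = a ∧ vs.getLast h = b ∧ DConnPath E W vs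

/-- `A` and `B` are d-connected given `W`. -/
def DConn (E : V → V → Prop) (A B W : Set V) : Prop :=
  ∃ (vs : List V) (h : vs ≠ []),
    vs.head h ∈ A ∧ vs.getLast h ∈ B ∧ DConnPath E W vs

/-- `A` and `B` are d-separated given `W`. -/
def DSep (E : V → V → Prop) (A B W : Set V) : Prop := ¬ DConn E A B W

/-- In an undirected graph `U`, there is a path between `A` and `B` that avoids `C`
(i.e. an active path given `C`). -/
def UConn (U : V → V → Prop) (A B C : Set V) : Prop :=
  ∃ (vs : List V) (h : vs ≠ []),
    vs.head h ∈ A ∧ vs.getLast h ∈ B ∧ vs.Nodup ∧ vs.Chain' U ∧ ∀ v ∈ vs, v ∉ C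

/-- `A` and `B` are separated given `C` in the undirected graph `U`. -/
def USep (U : V → V → Prop) (A B C : Set V) : Prop := ¬ UConn U A B C

/-- Ancestors of `A`: vertices with a directed path to some member of `A`, together
with `A` itself. -/
def Anc (E : V → V → Prop) (A : Set V) : Set V :=
  {v | v ∈ A ∨ ∃ a ∈ A, Relation.TransGen E v a}

/-- A directed graph is acyclic (a DAG) when it has no directed cycle. -/
def Acyclic (E : V → V → Prop) : Prop := ∀ v, ¬ Relation.TransGen E v v

/-- Subgraph of `E` induced on the vertex set `S`. -/
def Induced (E : V → V → Prop) (S : Set V) : V → V → Prop :=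
  fun a b => E a b ∧ a ∈ S ∧ b ∈ S

/-- The moral graph of a directed graph: marry all spouses (pairs with a common child)
and forget edge directions. -/
def Moral (E : V → V → Prop) : V → V → Prop :=
  fun a b => a ≠ b ∧ (E a b ∨ E b a ∨ ∃ c, E a c ∧ E b c)

end Graphs

/-! Mixtures of DAGs and the mother graph.  Variables are `Option X`, with `none`
playing the role of the auxiliary time variable `T` and `some x` the role of the
substantive variable `x`.  The sub-DAGs are a family `G : K → Option X → Option X → Prop`
indexed by `K`; the mother graph is their disjoint union, with vertex type `Option X × K`. -/

section Mother

variable {X K : Type*}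

/-- Edge relation of the mother graph: the disjoint union of the sub-DAGs `G k`. -/
def MotherEdge (G : K → Option X → Option X → Prop) :
    Option X × K → Option X × K → Prop :=
  fun a b => a.2 = b.2 ∧ G a.2 a.1 b.1

/-- The set `D′` of all vertex copies of the variables in `D`. -/
def Copies (D : Set (Option X)) : Set (Option X × K) := {v | v.1 ∈ D}

/-- The set of variables having some vertex copy among the ancestors (in the mother
graph) of the vertex copies of `D`. -/
def AncVars (G : K → Option X → Option X → Prop) (D : Set (Option X)) : Set (Option X) :=
  {z | ∃ k, (z, k) ∈ Anc (MotherEdge G) (Copies D)}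

/-- `a` and `b` are adjacent in some sub-DAG. -/
def MAdj (G : K → Option X → Option X → Prop) (a b : Option X) : Prop :=
  ∃ k, G k a b ∨ G k b a

/-- The middle variable of the triple `⟨a, b, c⟩` is an m-collider: either
`a → b ← c` in some sub-DAG, or `a → b ← T` in one sub-DAG and `T → b ← c` in another,
where `b` (and, in the second case, `a` and `c`) are substantive variables. -/
def MColliderTriple (G : K → Option X → Option X → Prop) (a b c : Option X) : Prop :=
  b ≠ none ∧
    ((∃ k, G k a b ∧ G k c b) ∨
      (a ≠ none ∧ c ≠ none ∧ ∃ k₁ k₂, k₁ ≠ k₂ ∧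
        G k₁ a b ∧ G k₁ none b ∧ G k₂ none b ∧ G k₂ c b))

/-- Admissible triple of an m-path: either both edges appear (in either orientation)
within a single sub-DAG, or `a → b ← T` in one sub-DAG and `T → b ← c` in another. -/
def MTriple (G : K → Option X → Option X → Prop) (a b c : Option X) : Prop :=
  (∃ k, (G k a b ∨ G k b a) ∧ (G k b c ∨ G k c b)) ∨
    (a ≠ none ∧ b ≠ none ∧ c ≠ none ∧ ∃ k₁ k₂, k₁ ≠ k₂ ∧
      G k₁ a b ∧ G k₁ none b ∧ G k₂ none b ∧ G k₂ c b)

/-- `b` is an m-collider on the m-path `vs`. -/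
def IsMColliderOn (G : K → Option X → Option X → Prop)
    (vs : List (Option X)) (b : Option X) : Prop :=
  ∃ a c, [a, b, c] <:+: vs ∧ MColliderTriple G a b c

/-- The variable sets `D` and `E` are m-d-connected given `F`: there is an m-path between
`D` and `E` such that every m-collider on it is in `F` and every non-m-collider on it is
not in `F`. -/
def MDConn (G : K → Option X → Option X → Prop) (D E F : Set (Option X)) : Prop :=
  ∃ (vs : List (Option X)) (h : vs ≠ []),
    vs.head h ∈ D ∧ vs.getLast h ∈ E ∧ vs.Nodup ∧ vs.Chain' (MAdj G) ∧
    (∀ a b c, [a, b, c] <:+: vs → MTriple G a b c) ∧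
    (∀ b, IsMColliderOn G vs b → b ∈ F) ∧
    (∀ b, IsInteriorOn vs b → ¬ IsMColliderOn G vs b → b ∉ F)

/-- `D` and `E` are m-d-separated given `F`. -/
def MDSep (G : K → Option X → Option X → Prop) (D E F : Set (Option X)) : Prop :=
  ¬ MDConn G D E F

end Mother

/-- The two sub-DAGs of Figure 3(a): variables `some 0 = X_i`, `some 1 = X_j`,
`some 2 = X_k`, `none = T`; sub-DAG `0` has edges `X_i → X_j` and `T → X_j`, and
sub-DAG `1` has edges `X_k → X_j` and `T → X_j`. -/
def GFig3a : Fin 2 → Option (Fin 3) → Option (Fin 3) → Prop := fun k a b =>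
  if k = 0 then (a = some 0 ∧ b = some 1) ∨ (a = none ∧ b = some 1)
  else (a = some 2 ∧ b = some 1) ∨ (a = none ∧ b = some 1)

/-- strictness of m-d-separation versus d-separation: in the mother graph
of `GFig3a`, `{X_i}` and `{X_k}` are d-separated given `{X_j}`, but they are NOT
m-d-separated given `{X_j}`; so the converse of "m-d-separation implies d-separation"
fails. -/
lemma infix3 {α : Type*} {a b c x y z : α} (h : [a, b, c] <:+: [x, y, z]) :
    a = x ∧ b = y ∧ c = z := by
  obtain ⟨s, t, hst⟩ := h
  have hlen := congrArg List.length hst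
  simp at hlen
  have hs : s = [] := List.eq_nil_of_length_eq_zero (by omega)
  subst hs
  simp at hst
  exact ⟨hst.1, hst.2.1, hst.2.2.1⟩

lemma gfig_adj_same {a b : Option (Fin 3) × Fin 2}
    (h : MotherEdge GFig3a a b ∨ MotherEdge GFig3a b a) : a.2 = b.2 := by
  rcases h with ⟨h, _⟩ | ⟨h, _⟩
  · exact h
  · exact h.symm

lemma chain_same_k {x : Option (Fin 3) × Fin 2} {l : List (Option (Fin 3) × Fin 2)}
    (h : (x :: l).Chain' (fun a b => MotherEdge GFig3a a b ∨ MotherEdge GFig3a b a)) :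
    ∀ p ∈ x :: l, p.2 = x.2 := by
  induction l generalizing x with
  | nil => intro p hp; simp at hp; subst hp; rfl
  | cons y l ih =>
    rw [List.Chain', List.isChain_cons_cons] at h
    intro p hp
    rcases List.mem_cons.1 hp with rfl | hp
    · rfl
    · rw [ih h.2 p hp]
      exact (gfig_adj_same h.1).symm

theorem mdSep_strictly_stronger_than_dSep :
    DSep (MotherEdge GFig3a)
      (Copies {some 0}) (Copies {some 2}) (Copies {some 1}) ∧
    ¬ MDSep GFig3a {some 0} {some 2} {some 1} := by
  constructor
  · -- d-separation in the mother graph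
    rintro ⟨vs, h, hhead, hlast, _, _, hchain, _, _⟩
    have hh1 : (vs.head h).1 = some 0 := hhead
    have hl1 : (vs.getLast h).1 = some 2 := hlast
    -- all vertices on the path share the same sub-DAG index
    obtain ⟨x, l, rfl⟩ := List.exists_cons_of_ne_nil h
    have hsame := chain_same_k hchain
    have hlk : ((x :: l).getLast h).2 = x.2 :=
      hsame _ (List.getLast_mem h)
    -- the path has at least two vertices
    cases l with
    | nil =>
      simp at hh1 hl1
      rw [hh1] at hl1
      exact (by decide : (some 0 : Option (Fin 3)) ≠ some 2) hl1
    | cons y m =>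
      have h2 : x.2 = 0 ∨ x.2 = 1 := by omega
      rcases h2 with h2 | h2
      · -- sub-DAG 0: the last vertex is (X_k, 0), which is isolated in G_0
        have hrev : ((x :: y :: m).reverse).Chain'
            (fun a b => MotherEdge GFig3a a b ∨ MotherEdge GFig3a b a) := by
          rw [List.Chain', List.isChain_reverse]
          exact hchain.imp (fun a b hab => hab.symm)
        obtain ⟨w, n, hw⟩ := List.exists_cons_of_ne_nil
          (l := (x :: y :: m).reverse) (by simp)
        have hwval : w = ((x :: y :: m).getLast h) := by
          rw [List.getLast_eq_head_reverse]
          simp only [hw, List.head_cons]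
        cases n with
        | nil =>
          have := congrArg List.length hw
          simp at this
        | cons z n' =>
          rw [hw, List.Chain', List.isChain_cons_cons] at hrev
          have hadj := hrev.1
          have hw1 : w.1 = some 2 := by rw [hwval]; exact hl1
          have hw2 : w.2 = 0 := by rw [hwval, hlk]; exact h2
          rcases hadj with ⟨hk, hg⟩ | ⟨hk, hg⟩
          · rw [hw2, hw1] at hg
            simp [GFig3a] at hg
          · rw [hk, hw2] at hg
            rw [hw1] at hg
            simp [GFig3a] at hg
      · -- sub-DAG 1: the first vertex is (X_i, 1), which is isolated in G_1
        rw [List.Chain', List.isChain_cons_cons] at hchain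
        have hadj := hchain.1
        have hx1 : x.1 = some 0 := hh1
        rcases hadj with ⟨hk, hg⟩ | ⟨hk, hg⟩
        · rw [h2, hx1] at hg
          simp [GFig3a] at hg
        · rw [hk, h2] at hg
          rw [hx1] at hg
          simp [GFig3a] at hg
  · -- not m-d-separated: witness path [X_i, X_j, X_k]
    intro hsep
    apply hsep
    refine ⟨[some 0, some 1, some 2], by simp, rfl, rfl, by decide, ?_, ?_, ?_, ?_⟩
    · -- Chain' MAdj
      refine List.isChain_cons_cons.2 ⟨⟨0, Or.inl ?_⟩, List.isChain_cons_cons.2 ⟨⟨1, Or.inr ?_⟩, by simp⟩⟩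
      · simp [GFig3a]
      · simp [GFig3a]
    · -- every consecutive triple is an m-triple
      intro a b c habc
      obtain ⟨rfl, rfl, rfl⟩ := infix3 habc
      exact Or.inr ⟨by decide, by decide, by decide, 0, 1, by decide,
        by simp [GFig3a], by simp [GFig3a], by simp [GFig3a], by simp [GFig3a]⟩
    · -- every m-collider is in the conditioning set
      rintro b ⟨a, c, habc, _⟩
      obtain ⟨rfl, rfl, rfl⟩ := infix3 habc
      rfl
    · -- every interior non-m-collider avoids the conditioning set
      rintro b ⟨a, c, habc⟩ hnc
      obtain ⟨rfl, rfl, rfl⟩ := infix3 habc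
      exact absurd ⟨some 0, some 2, List.infix_refl _,
        by decide, Or.inr ⟨by decide, by decide, 0, 1, by decide,
          by simp [GFig3a], by simp [GFig3a], by simp [GFig3a], by simp [GFig3a]⟩⟩ hnc
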